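/- Let G be a balanced bipartite graph with 2n vertices and X its reduced adjacency matrix. Then the following are equivalent: (i) G is α⁺-stable; (ii) X has a nonzero diagonal; (iii) the term rank ρ(X) equals n; (iv) per(X) > 0. -/

import Mathlib

open SimpleGraph

/-- A stable (independent) set of vertices: pairwise nonadjacent. -/
def IsStableSet {V : Type*} (G : SimpleGraph V) (S : Set V) : Prop :=
  S.Pairwise fun u v => ¬ G.Adj u v

/-- The stability number `α(G)`: maximum cardinality of a stable set. -/
noncomputable def stabNum {V : Type*} (G : SimpleGraph V) : ℕ :=
  sSup {k | ∃ S : Set V, IsStableSet G S ∧ S.ncard = k}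

/-- A maximum stable set. -/
def IsMaxStableSet {V : Type*} (G : SimpleGraph V) (S : Set V) : Prop :=
  IsStableSet G S ∧ S.ncard = stabNum G

/-- `G` is α⁺-stable: adding any edge between nonadjacent vertices keeps α. -/
def AlphaPlusStable {V : Type*} (G : SimpleGraph V) : Prop :=
  ∀ x y : V, x ≠ y → ¬ G.Adj x y →
    stabNum (G ⊔ SimpleGraph.fromEdgeSet {s(x, y)}) = stabNum G

/-- `G` is α⁻-stable: deleting any edge keeps α. -/
def AlphaMinusStable {V : Type*} (G : SimpleGraph V) : Prop :=
  ∀ e ∈ G.edgeSet, stabNum (G.deleteEdges {e}) = stabNum G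

/-- `G` is α-stable: both α⁺-stable and α⁻-stable. -/
def AlphaStable {V : Type*} (G : SimpleGraph V) : Prop :=
  AlphaPlusStable G ∧ AlphaMinusStable G

/-- `{A, B}` is a bipartition of `G`. -/
def IsBipartition {V : Type*} (G : SimpleGraph V) (A B : Set V) : Prop :=
  Disjoint A B ∧ A ∪ B = Set.univ ∧
    ∀ ⦃x y⦄, G.Adj x y → (x ∈ A ∧ y ∈ B) ∨ (x ∈ B ∧ y ∈ A)

/-- `G` is bistable bipartite w.r.t. bipartition `{A, B}`:
`A` and `B` are its only maximum stable sets. -/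
def BistableBipartite {V : Type*} (G : SimpleGraph V) (A B : Set V) : Prop :=
  IsBipartition G A B ∧ ∀ S : Set V, IsMaxStableSet G S ↔ S = A ∨ S = B

/-- `G` has a perfect matching. -/
def HasPerfectMatching {V : Type*} (G : SimpleGraph V) : Prop :=
  ∃ M : G.Subgraph, M.IsPerfectMatching

/-- `X` has a `k` by `n - k` zero submatrix for some `1 ≤ k ≤ n - 1`. -/
def HasZeroSubmatrix {m : Type*} [Fintype m] (X : Matrix m m ℕ) : Prop :=
  ∃ R C : Finset m, R.Nonempty ∧ C.Nonempty ∧ R.card + C.card = Fintype.card m ∧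
    ∀ i ∈ R, ∀ j ∈ C, X i j = 0

/-- A square matrix is partly decomposable. -/
def PartlyDecomposable {m : Type*} [Fintype m] (X : Matrix m m ℕ) : Prop :=
  (Fintype.card m = 1 ∧ ∀ i j, X i j = 0) ∨ HasZeroSubmatrix X

/-- A square matrix is fully indecomposable iff it is not partly decomposable. -/
def FullyIndecomposable {m : Type*} [Fintype m] (X : Matrix m m ℕ) : Prop :=
  ¬ PartlyDecomposable X

/-- A (0,1)-matrix. -/
def ZeroOne {m k : Type*} (X : Matrix m k ℕ) : Prop :=
  ∀ i j, X i j = 0 ∨ X i j = 1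

/-- The term rank: maximal number of nonzero entries, no two on a line. -/
noncomputable def termRank {m k : Type*} [Fintype m] [Fintype k] (X : Matrix m k ℕ) : ℕ :=
  sSup {r | ∃ (f : Fin r ↪ m) (g : Fin r ↪ k), ∀ i, X (f i) (g i) ≠ 0}

/-- The permanent of a square matrix with natural entries. -/
def perm {m : Type*} [Fintype m] [DecidableEq m] (X : Matrix m m ℕ) : ℕ :=
  ∑ σ : Equiv.Perm m, ∏ i, X (σ i) i

/-- The bipartite graph whose reduced adjacency matrix is the (0,1)-matrix `X`. -/
def matGraph {ι κ : Type*} (X : Matrix ι κ ℕ) : SimpleGraph (ι ⊕ κ) :=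
  SimpleGraph.fromRel fun u v => ∃ i j, u = Sum.inl i ∧ v = Sum.inr j ∧ X i j = 1

namespace Stmt13

variable {ι κ : Type*}

lemma adj_inl_inr (X : Matrix ι κ ℕ) (i : ι) (j : κ) :
    (matGraph X).Adj (Sum.inl i) (Sum.inr j) ↔ X i j = 1 := by
  simp [matGraph, fromRel_adj]

lemma not_adj_inl_inl (X : Matrix ι κ ℕ) (i i' : ι) :
    ¬ (matGraph X).Adj (Sum.inl i) (Sum.inl i') := by
  simp [matGraph, fromRel_adj]

lemma not_adj_inr_inr (X : Matrix ι κ ℕ) (j j' : κ) :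
    ¬ (matGraph X).Adj (Sum.inr j) (Sum.inr j') := by
  simp [matGraph, fromRel_adj]

end Stmt13

namespace Stmt13
variable {n : ℕ}

/-- Neighborhood in columns of a set of rows. -/
def NN (X : Matrix (Fin n) (Fin n) ℕ) (R : Finset (Fin n)) : Finset (Fin n) :=
  R.biUnion fun i => Finset.univ.filter fun j => X i j ≠ 0

lemma mem_NN {X : Matrix (Fin n) (Fin n) ℕ} {R : Finset (Fin n)} {j : Fin n} :
    j ∈ NN X R ↔ ∃ i ∈ R, X i j ≠ 0 := by
  simp [NN]

lemma NN_mono {X : Matrix (Fin n) (Fin n) ℕ} {R R' : Finset (Fin n)} (h : R ⊆ R') :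
    NN X R ⊆ NN X R' := Finset.biUnion_subset_biUnion_of_subset_left _ h

lemma NN_union (X : Matrix (Fin n) (Fin n) ℕ) (R R' : Finset (Fin n)) :
    NN X (R ∪ R') = NN X R ∪ NN X R' := by
  ext j; simp [mem_NN, Finset.mem_union, or_and_right, exists_or]

lemma NN_inter_subset (X : Matrix (Fin n) (Fin n) ℕ) (R R' : Finset (Fin n)) :
    NN X (R ∩ R') ⊆ NN X R ∩ NN X R' :=
  Finset.subset_inter (NN_mono Finset.inter_subset_left) (NN_mono Finset.inter_subset_right)

/-- Maximal deficiency. -/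
def dfc (X : Matrix (Fin n) (Fin n) ℕ) : ℕ :=
  Finset.univ.powerset.sup fun R => R.card - (NN X R).card

lemma card_le_NN_add_dfc (X : Matrix (Fin n) (Fin n) ℕ) (R : Finset (Fin n)) :
    R.card ≤ (NN X R).card + dfc X := by
  have h : R.card - (NN X R).card ≤ dfc X := by
    unfold dfc
    exact Finset.le_sup (f := fun R => R.card - (NN X R).card)
      (Finset.mem_powerset.2 (Finset.subset_univ R))
  omega

lemma exists_dfc (X : Matrix (Fin n) (Fin n) ℕ) :
    ∃ R : Finset (Fin n), R.card - (NN X R).card = dfc X := by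
  obtain ⟨R, -, hR⟩ := Finset.exists_mem_eq_sup Finset.univ.powerset ⟨∅, by simp⟩
    (fun R => R.card - (NN X R).card)
  exact ⟨R, hR.symm⟩

open Classical in
/-- rows of a vertex set -/
noncomputable def rowsOf (S : Set (Fin n ⊕ Fin n)) : Finset (Fin n) :=
  (Set.toFinite {i | Sum.inl i ∈ S}).toFinset

open Classical in
noncomputable def colsOf (S : Set (Fin n ⊕ Fin n)) : Finset (Fin n) :=
  (Set.toFinite {j | Sum.inr j ∈ S}).toFinset

lemma mem_rowsOf {S : Set (Fin n ⊕ Fin n)} {i : Fin n} : i ∈ rowsOf S ↔ Sum.inl i ∈ S :=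
  Set.Finite.mem_toFinset _

lemma mem_colsOf {S : Set (Fin n ⊕ Fin n)} {j : Fin n} : j ∈ colsOf S ↔ Sum.inr j ∈ S :=
  Set.Finite.mem_toFinset _

lemma ncard_decomp (S : Set (Fin n ⊕ Fin n)) :
    S.ncard = (rowsOf S).card + (colsOf S).card := by
  have hS : S = Sum.inl '' {i | Sum.inl i ∈ S} ∪ Sum.inr '' {j | Sum.inr j ∈ S} := by
    ext x; cases x <;> simp
  have h1 : {i | Sum.inl i ∈ S}.ncard = (rowsOf S).card :=
    Set.ncard_eq_toFinset_card _ (Set.toFinite _)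
  have h2 : {j | Sum.inr j ∈ S}.ncard = (colsOf S).card :=
    Set.ncard_eq_toFinset_card _ (Set.toFinite _)
  rw [← h1, ← h2]
  conv_lhs => rw [hS]
  rw [Set.ncard_union_eq]
  · rw [Set.ncard_image_of_injective _ Sum.inl_injective,
      Set.ncard_image_of_injective _ Sum.inr_injective]
  · rw [Set.disjoint_left]; rintro x ⟨i, -, rfl⟩ ⟨j, -, h⟩; exact Sum.inl_ne_inr h.symm

/-- ncard of a standard stable set built from a row set and a column set -/
lemma ncard_union_images (R C : Finset (Fin n)) :
    ((Sum.inl '' (R : Set (Fin n))) ∪ (Sum.inr '' (C : Set (Fin n))) :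
      Set (Fin n ⊕ Fin n)).ncard = R.card + C.card := by
  rw [Set.ncard_union_eq]
  · rw [Set.ncard_image_of_injective _ Sum.inl_injective,
      Set.ncard_image_of_injective _ Sum.inr_injective, Set.ncard_coe_finset,
      Set.ncard_coe_finset]
  · rw [Set.disjoint_left]; rintro x ⟨i, -, rfl⟩ ⟨j, -, h⟩; exact Sum.inl_ne_inr h.symm

end Stmt13


namespace Stmt13
variable {n : ℕ} {X : Matrix (Fin n) (Fin n) ℕ}

lemma stable_mono {V : Type*} {G H : SimpleGraph V} (hGH : G ≤ H) {S : Set V}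
    (h : IsStableSet H S) : IsStableSet G S :=
  fun _ hu _ hv huv hadj => h hu hv huv (hGH hadj)

lemma stabNum_le_of {V : Type*} (G : SimpleGraph V) (m : ℕ)
    (h : ∀ S, IsStableSet G S → S.ncard ≤ m) : stabNum G ≤ m := by
  unfold stabNum
  refine csSup_le ⟨0, ∅, Set.pairwise_empty _, Set.ncard_empty _⟩ ?_
  rintro k ⟨S, hS, rfl⟩
  exact h S hS

lemma le_stabNum {V : Type*} [Finite V] (G : SimpleGraph V) {S : Set V}
    (hS : IsStableSet G S) : S.ncard ≤ stabNum G := by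
  unfold stabNum
  refine le_csSup ⟨Nat.card V, ?_⟩ ⟨S, hS, rfl⟩
  rintro k ⟨T, hT, rfl⟩
  have := Set.ncard_le_ncard (Set.subset_univ T) Set.finite_univ
  rwa [Set.ncard_univ] at this

/-- stability characterization for `matGraph`. -/
lemma stable_iff (h01 : ZeroOne X) {S : Set (Fin n ⊕ Fin n)} :
    IsStableSet (matGraph X) S ↔ ∀ i ∈ rowsOf S, ∀ j ∈ colsOf S, X i j = 0 := by
  constructor
  · intro hS i hi j hj
    rw [mem_rowsOf] at hi; rw [mem_colsOf] at hj
    have hne : (Sum.inl i : Fin n ⊕ Fin n) ≠ Sum.inr j := Sum.inl_ne_inr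
    have := hS hi hj hne
    simp only [adj_inl_inr] at this
    rcases h01 i j with h | h
    · exact h
    · exact absurd h this
  · intro h u hu v hv huv hadj
    rcases u with i | j <;> rcases v with i' | j'
    · exact not_adj_inl_inl X i i' hadj
    · have := h i (mem_rowsOf.2 hu) j' (mem_colsOf.2 hv)
      rw [adj_inl_inr] at hadj; omega
    · have h0 := h i' (mem_rowsOf.2 hv) j (mem_colsOf.2 hu)
      have h1 := (adj_inl_inr X i' j).1 hadj.symm
      omega
    · exact not_adj_inr_inr X j j' hadj

/-- the canonical stable set attached to a row set. -/
lemma stable_construct (R : Finset (Fin n)) :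
    IsStableSet (matGraph X)
      ((Sum.inl '' (R : Set (Fin n))) ∪ (Sum.inr '' (((NN X R)ᶜ : Finset (Fin n)) : Set (Fin n)))) := by
  intro u hu v hv huv hadj
  rcases u with i | j <;> rcases v with i' | j'
  · exact not_adj_inl_inl X i i' hadj
  · have hi : i ∈ R := by
      rcases hu with ⟨a, ha, h⟩ | ⟨a, ha, h⟩
      · cases h; exact_mod_cast ha
      · exact absurd h (by simp)
    have hj : j' ∈ (NN X R)ᶜ := by
      rcases hv with ⟨a, ha, h⟩ | ⟨a, ha, h⟩
      · exact absurd h (by simp)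
      · cases h; exact_mod_cast ha
    rw [adj_inl_inr] at hadj
    rw [Finset.mem_compl] at hj
    exact hj (mem_NN.2 ⟨i, hi, by omega⟩)
  · have hj : j ∈ (NN X R)ᶜ := by
      rcases hu with ⟨a, ha, h⟩ | ⟨a, ha, h⟩
      · exact absurd h (by simp)
      · cases h; exact_mod_cast ha
    have hi : i' ∈ R := by
      rcases hv with ⟨a, ha, h⟩ | ⟨a, ha, h⟩
      · cases h; exact_mod_cast ha
      · exact absurd h (by simp)
    have h1 := (adj_inl_inr X i' j).1 hadj.symm
    rw [Finset.mem_compl] at hj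
    exact hj (mem_NN.2 ⟨i', hi, by omega⟩)
  · exact not_adj_inr_inr X j j' hadj

end Stmt13

namespace Stmt13
variable {n : ℕ} {X : Matrix (Fin n) (Fin n) ℕ}

lemma NN_card_le (X : Matrix (Fin n) (Fin n) ℕ) (R : Finset (Fin n)) :
    (NN X R).card ≤ n := le_trans (Finset.card_le_univ _) (by simp)

lemma cols_NN_card (h01 : ZeroOne X) {S : Set (Fin n ⊕ Fin n)}
    (hS : IsStableSet (matGraph X) S) :
    (colsOf S).card + (NN X (rowsOf S)).card ≤ n := by
  have hdisj : Disjoint (colsOf S) (NN X (rowsOf S)) := by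
    rw [Finset.disjoint_left]
    intro j hj hjN
    obtain ⟨i, hi, hij⟩ := mem_NN.1 hjN
    exact hij ((stable_iff h01).1 hS i hi j hj)
  calc (colsOf S).card + (NN X (rowsOf S)).card
      = (colsOf S ∪ NN X (rowsOf S)).card := (Finset.card_union_of_disjoint hdisj).symm
    _ ≤ (Finset.univ : Finset (Fin n)).card := Finset.card_le_univ _
    _ = n := by simp

/-- upper bound on stable sets. -/
lemma stable_ncard_le (h01 : ZeroOne X) {S : Set (Fin n ⊕ Fin n)}
    (hS : IsStableSet (matGraph X) S) : S.ncard ≤ n + dfc X := by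
  rw [ncard_decomp]
  have h1 := cols_NN_card h01 hS
  have h2 := card_le_NN_add_dfc X (rowsOf S)
  omega

lemma stabNum_matGraph (h01 : ZeroOne X) : stabNum (matGraph X) = n + dfc X := by
  refine le_antisymm (stabNum_le_of _ _ fun S hS => stable_ncard_le h01 hS) ?_
  obtain ⟨R, hR⟩ : ∃ R : Finset (Fin n), R.card = (NN X R).card + dfc X := by
    rcases Nat.eq_zero_or_pos (dfc X) with h0 | h1
    · exact ⟨∅, by simp [NN, h0]⟩
    · obtain ⟨R, hR⟩ := exists_dfc X
      exact ⟨R, by omega⟩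
  have hst := le_stabNum (matGraph X) (stable_construct (X := X) R)
  rw [ncard_union_images] at hst
  have h2 : ((NN X R)ᶜ : Finset (Fin n)).card = n - (NN X R).card := by
    rw [Finset.card_compl]; simp
  have h3 := NN_card_le X R
  omega

/-- with a perfect matching, every stable set has at most `n` elements. -/
lemma stable_ncard_le_n (h01 : ZeroOne X) (σ : Equiv.Perm (Fin n))
    (hσ : ∀ i, X i (σ i) ≠ 0) {S : Set (Fin n ⊕ Fin n)}
    (hS : IsStableSet (matGraph X) S) : S.ncard ≤ n := by
  rw [ncard_decomp]
  have hdisj : Disjoint ((rowsOf S).image σ) (colsOf S) := by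
    rw [Finset.disjoint_left]
    intro j hj hjc
    obtain ⟨i, hi, rfl⟩ := Finset.mem_image.1 hj
    exact hσ i ((stable_iff h01).1 hS i hi (σ i) hjc)
  calc (rowsOf S).card + (colsOf S).card
      = ((rowsOf S).image σ).card + (colsOf S).card := by
        rw [Finset.card_image_of_injective _ σ.injective]
    _ = ((rowsOf S).image σ ∪ colsOf S).card := (Finset.card_union_of_disjoint hdisj).symm
    _ ≤ (Finset.univ : Finset (Fin n)).card := Finset.card_le_univ _
    _ = n := by simp

lemma dfc_eq_zero (σ : Equiv.Perm (Fin n)) (hσ : ∀ i, X i (σ i) ≠ 0) : dfc X = 0 := by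
  apply Nat.eq_zero_of_le_zero
  apply Finset.sup_le
  intro R _
  have : R.image σ ⊆ NN X R := by
    intro j hj
    obtain ⟨i, hi, rfl⟩ := Finset.mem_image.1 hj
    exact mem_NN.2 ⟨i, hi, hσ i⟩
  have h1 := Finset.card_le_card this
  rw [Finset.card_image_of_injective _ σ.injective] at h1
  omega

lemma dfc_pos (hno : ¬ ∃ σ : Equiv.Perm (Fin n), ∀ i, X i (σ i) ≠ 0) : 0 < dfc X := by
  rcases Nat.eq_zero_or_pos (dfc X) with h0 | h1
  · exfalso
    apply hno
    have hall : ∀ s : Finset (Fin n),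
        s.card ≤ (s.biUnion fun i => Finset.univ.filter fun j => X i j ≠ 0).card := by
      intro s
      have := card_le_NN_add_dfc X s
      rw [h0] at this
      simpa [NN] using this
    obtain ⟨f, hinj, hf⟩ := (Finset.all_card_le_biUnion_card_iff_exists_injective _).1 hall
    refine ⟨Equiv.ofBijective f (Finite.injective_iff_bijective.1 hinj), fun i => ?_⟩
    have := hf i
    simp only [Finset.mem_filter] at this
    exact this.2
  · exact h1

end Stmt13

namespace Stmt13
variable {n : ℕ} {X : Matrix (Fin n) (Fin n) ℕ}

/-- row sets of maximum deficiency. -/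
def MD (X : Matrix (Fin n) (Fin n) ℕ) : Finset (Finset (Fin n)) :=
  Finset.univ.powerset.filter fun R => R.card = (NN X R).card + dfc X

lemma mem_MD {R : Finset (Fin n)} : R ∈ MD X ↔ R.card = (NN X R).card + dfc X := by
  simp [MD]

lemma MD_nonempty (hd : 0 < dfc X) : (MD X).Nonempty := by
  obtain ⟨R, hR⟩ := exists_dfc X
  exact ⟨R, mem_MD.2 (by omega)⟩

lemma MD_inter_union {I R : Finset (Fin n)} (hI : I ∈ MD X) (hR : R ∈ MD X) :
    I ∩ R ∈ MD X ∧ I ∪ R ∈ MD X := by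
  rw [mem_MD] at hI hR
  have h1 : (NN X (I ∪ R)).card + (NN X I ∩ NN X R).card = (NN X I).card + (NN X R).card := by
    rw [NN_union]; exact Finset.card_union_add_card_inter _ _
  have h2 : (NN X (I ∩ R)).card ≤ (NN X I ∩ NN X R).card :=
    Finset.card_le_card (NN_inter_subset X I R)
  have h3 := card_le_NN_add_dfc X (I ∩ R)
  have h4 := card_le_NN_add_dfc X (I ∪ R)
  have h5 : (I ∪ R).card + (I ∩ R).card = I.card + R.card :=
    Finset.card_union_add_card_inter _ _
  exact ⟨mem_MD.2 (by omega), mem_MD.2 (by omega)⟩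

/-- the key pair of vertices contained in every maximum stable set. -/
lemma exists_core_pair (hd : 0 < dfc X) :
    ∃ (i₀ j₀ : Fin n), X i₀ j₀ = 0 ∧
      ∀ R ∈ MD X, i₀ ∈ R ∧ j₀ ∉ NN X R := by
  obtain ⟨I, hI, hImin⟩ := Finset.exists_min_image (MD X) Finset.card (MD_nonempty hd)
  obtain ⟨D, hD, hDmax⟩ := Finset.exists_max_image (MD X) Finset.card (MD_nonempty hd)
  have hIsub : ∀ R ∈ MD X, I ⊆ R := by
    intro R hR
    have hmem := (MD_inter_union hI hR).1
    have h1 : I ∩ R ⊆ I := Finset.inter_subset_left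
    have h2 := hImin _ hmem
    have := Finset.eq_of_subset_of_card_le h1 h2
    rw [← this]
    exact Finset.inter_subset_right
  have hDsub : ∀ R ∈ MD X, R ⊆ D := by
    intro R hR
    have hmem := (MD_inter_union hD hR).2
    have h1 : D ⊆ D ∪ R := Finset.subset_union_left
    have h2 := hDmax _ hmem
    have := Finset.eq_of_subset_of_card_le h1 h2
    intro a ha
    rw [this]
    exact Finset.mem_union_right _ ha
  have hIne : I.Nonempty := by
    rw [← Finset.card_pos]
    have := mem_MD.1 hI
    omega
  obtain ⟨i₀, hi₀⟩ := hIne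
  have hDcard : (NN X D).card < n := by
    have h1 := mem_MD.1 hD
    have h2 : D.card ≤ n := le_trans (Finset.card_le_univ _) (by simp)
    omega
  have hcompl : ((NN X D)ᶜ : Finset (Fin n)).Nonempty := by
    rw [← Finset.card_pos, Finset.card_compl]
    simp only [Fintype.card_fin]
    omega
  obtain ⟨j₀, hj₀⟩ := hcompl
  rw [Finset.mem_compl] at hj₀
  refine ⟨i₀, j₀, ?_, ?_⟩
  · by_contra h
    exact hj₀ (mem_NN.2 ⟨i₀, hIsub D hD hi₀, h⟩)
  · intro R hR
    exact ⟨hIsub R hR hi₀, fun hmem => hj₀ (NN_mono (hDsub R hR) hmem)⟩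

end Stmt13

namespace Stmt13
variable {n : ℕ} {X : Matrix (Fin n) (Fin n) ℕ}

lemma ncard_inr_univ :
    (Sum.inr '' (Set.univ : Set (Fin n)) : Set (Fin n ⊕ Fin n)).ncard = n := by
  rw [Set.ncard_image_of_injective _ Sum.inr_injective, Set.ncard_univ,
    Nat.card_eq_fintype_card, Fintype.card_fin]

lemma ncard_inl_univ :
    (Sum.inl '' (Set.univ : Set (Fin n)) : Set (Fin n ⊕ Fin n)).ncard = n := by
  rw [Set.ncard_image_of_injective _ Sum.inl_injective, Set.ncard_univ,
    Nat.card_eq_fintype_card, Fintype.card_fin]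

lemma alphaPlus_of_matching (h01 : ZeroOne X) (σ : Equiv.Perm (Fin n))
    (hσ : ∀ i, X i (σ i) ≠ 0) : AlphaPlusStable (matGraph X) := by
  intro x y hxy hnadj
  have hd := dfc_eq_zero σ hσ
  have hG : stabNum (matGraph X) = n := by
    rw [stabNum_matGraph h01, hd]
    omega
  rw [hG]
  apply le_antisymm
  · exact stabNum_le_of _ _ fun S hS =>
      stable_ncard_le_n h01 σ hσ (stable_mono le_sup_left hS)
  · have key : ∃ S : Set (Fin n ⊕ Fin n),
        IsStableSet (matGraph X ⊔ fromEdgeSet {s(x, y)}) S ∧ S.ncard = n := by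
      by_cases hcase : (∃ j j', x = Sum.inr j ∧ y = Sum.inr j')
      · -- both endpoints on the right: use the left side
        refine ⟨Sum.inl '' Set.univ, ?_, ncard_inl_univ⟩
        rintro u ⟨a, -, rfl⟩ v ⟨b, -, rfl⟩ huv hadj
        obtain ⟨j, j', rfl, rfl⟩ := hcase
        rcases hadj with h | h
        · exact not_adj_inl_inl X a b h
        · rw [fromEdgeSet_adj, Set.mem_singleton_iff, Sym2.eq_iff] at h
          rcases h.1 with ⟨h1, -⟩ | ⟨h1, -⟩ <;> exact Sum.inl_ne_inr h1
      · -- not both on the right: use the right side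
        refine ⟨Sum.inr '' Set.univ, ?_, ncard_inr_univ⟩
        rintro u ⟨a, -, rfl⟩ v ⟨b, -, rfl⟩ huv hadj
        rcases hadj with h | h
        · exact not_adj_inr_inr X a b h
        · rw [fromEdgeSet_adj, Set.mem_singleton_iff, Sym2.eq_iff] at h
          apply hcase
          rcases h.1 with ⟨h1, h2⟩ | ⟨h1, h2⟩
          · exact ⟨a, b, h1.symm, h2.symm⟩
          · exact ⟨b, a, h2.symm, h1.symm⟩
    obtain ⟨S, hS, hcard⟩ := key
    have := le_stabNum _ hS
    omega

lemma not_alphaPlus (h01 : ZeroOne X)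
    (hno : ¬ ∃ σ : Equiv.Perm (Fin n), ∀ i, X i (σ i) ≠ 0) :
    ¬ AlphaPlusStable (matGraph X) := by
  have hd := dfc_pos hno
  obtain ⟨i₀, j₀, hX0, hcore⟩ := exists_core_pair hd
  intro hA
  have h := hA (Sum.inl i₀) (Sum.inr j₀) Sum.inl_ne_inr
    (by intro hadj; rw [adj_inl_inr] at hadj; omega)
  have hG := stabNum_matGraph (n := n) (X := X) h01
  have hle : stabNum (matGraph X ⊔ fromEdgeSet {s(Sum.inl i₀, Sum.inr j₀)}) ≤
      n + dfc X - 1 := by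
    apply stabNum_le_of
    intro S hS
    by_contra hc
    push_neg at hc
    have hSG := stable_mono le_sup_left hS
    have hub := stable_ncard_le h01 hSG
    have h1 := cols_NN_card h01 hSG
    have h2 := card_le_NN_add_dfc X (rowsOf S)
    have h3 := ncard_decomp S
    have hrows : rowsOf S ∈ MD X := mem_MD.2 (by omega)
    obtain ⟨hi, hj⟩ := hcore _ hrows
    have hxS : Sum.inl i₀ ∈ S := mem_rowsOf.1 hi
    have hsub : colsOf S ⊆ (NN X (rowsOf S))ᶜ := by
      intro j hj'
      rw [Finset.mem_compl]
      intro hmem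
      obtain ⟨i, hiR, hij⟩ := mem_NN.1 hmem
      exact hij ((stable_iff h01).1 hSG i hiR j hj')
    have hceq : colsOf S = (NN X (rowsOf S))ᶜ := by
      apply Finset.eq_of_subset_of_card_le hsub
      rw [Finset.card_compl, Fintype.card_fin]
      omega
    have hyS : Sum.inr j₀ ∈ S := by
      rw [← mem_colsOf, hceq, Finset.mem_compl]
      exact hj
    have hadj : (matGraph X ⊔ fromEdgeSet {s(Sum.inl i₀, Sum.inr j₀)}).Adj
        (Sum.inl i₀) (Sum.inr j₀) := by
      rw [SimpleGraph.sup_adj]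
      right
      rw [fromEdgeSet_adj]
      exact ⟨rfl, Sum.inl_ne_inr⟩
    exact hS hxS hyS Sum.inl_ne_inr hadj
  rw [h, hG] at hle
  omega

end Stmt13

namespace Stmt13
variable {n : ℕ} {X : Matrix (Fin n) (Fin n) ℕ}

lemma termRank_le_n' {r : ℕ}
    (h : ∃ (f : Fin r ↪ Fin n) (g : Fin r ↪ Fin n), ∀ i, X (f i) (g i) ≠ 0) : r ≤ n := by
  obtain ⟨f, -, -⟩ := h
  simpa using Fintype.card_le_of_embedding f

lemma termRank_of_perm (σ : Equiv.Perm (Fin n)) (hσ : ∀ i, X i (σ i) ≠ 0) :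
    termRank X = n := by
  unfold termRank
  have hmem : n ∈ {r | ∃ (f : Fin r ↪ Fin n) (g : Fin r ↪ Fin n), ∀ i, X (f i) (g i) ≠ 0} :=
    ⟨Function.Embedding.refl _, σ.toEmbedding, fun i => hσ i⟩
  refine le_antisymm (csSup_le ⟨n, hmem⟩ fun r hr => termRank_le_n' hr) ?_
  exact le_csSup ⟨n, fun r hr => termRank_le_n' hr⟩ hmem

lemma perm_of_termRank (h : termRank X = n) :
    ∃ σ : Equiv.Perm (Fin n), ∀ i, X i (σ i) ≠ 0 := by
  have h0 : (0 : ℕ) ∈ {r | ∃ (f : Fin r ↪ Fin n) (g : Fin r ↪ Fin n), ∀ i, X (f i) (g i) ≠ 0} :=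
    ⟨Function.Embedding.ofIsEmpty, Function.Embedding.ofIsEmpty, fun i => i.elim0⟩
  have hmem : termRank X ∈
      {r | ∃ (f : Fin r ↪ Fin n) (g : Fin r ↪ Fin n), ∀ i, X (f i) (g i) ≠ 0} := by
    unfold termRank
    exact Nat.sSup_mem ⟨0, h0⟩ ⟨n, fun r hr => termRank_le_n' hr⟩
  rw [h] at hmem
  obtain ⟨f, g, hfg⟩ := hmem
  let ef := Equiv.ofBijective f (Finite.injective_iff_bijective.1 f.injective)
  let eg := Equiv.ofBijective g (Finite.injective_iff_bijective.1 g.injective)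
  refine ⟨ef.symm.trans eg, fun i => ?_⟩
  show X i (g (ef.symm i)) ≠ 0
  have hfi : f (ef.symm i) = i := ef.apply_symm_apply i
  have h2 := hfg (ef.symm i)
  rwa [hfi] at h2

end Stmt13

namespace Stmt13
variable {n : ℕ} {X : Matrix (Fin n) (Fin n) ℕ}

lemma perm_pos_of (σ : Equiv.Perm (Fin n)) (hσ : ∀ i, X i (σ i) ≠ 0) : 0 < perm X := by
  have hterm : 0 < ∏ i, X (σ⁻¹ i) i := by
    apply Finset.prod_pos
    intro i _
    have h := hσ (σ⁻¹ i)
    have hi : σ (σ⁻¹ i) = i := σ.apply_symm_apply i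
    rw [hi] at h
    omega
  calc 0 < ∏ i, X (σ⁻¹ i) i := hterm
    _ ≤ perm X := by
      unfold perm
      exact Finset.single_le_sum (f := fun τ : Equiv.Perm (Fin n) => ∏ i, X (τ i) i)
        (fun τ _ => Nat.zero_le _) (Finset.mem_univ σ⁻¹)

lemma of_perm_pos (h : 0 < perm X) : ∃ σ : Equiv.Perm (Fin n), ∀ i, X i (σ i) ≠ 0 := by
  have hsum : (∑ τ : Equiv.Perm (Fin n), ∏ i, X (τ i) i) ≠ 0 := by
    unfold perm at h; omega
  have : ∃ τ ∈ (Finset.univ : Finset (Equiv.Perm (Fin n))), (∏ i, X (τ i) i) ≠ 0 :=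
    Finset.exists_ne_zero_of_sum_ne_zero hsum
  obtain ⟨τ, -, hτ⟩ := this
  rw [Finset.prod_ne_zero_iff] at hτ
  refine ⟨τ⁻¹, fun i => ?_⟩
  have h2 := hτ (τ⁻¹ i) (Finset.mem_univ _)
  have hi : τ (τ⁻¹ i) = i := τ.apply_symm_apply i
  rwa [hi] at h2

end Stmt13

open Stmt13 in
/-- Let `G` be the balanced bipartite graph on `2n` vertices with
reduced adjacency matrix `X`. TFAE: (i) `G` is α⁺-stable; (ii) `X` has a nonzero
diagonal; (iii) the term rank of `X` equals `n`; (iv) `per X > 0`. -/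
theorem stmt_13 {n : ℕ} (X : Matrix (Fin n) (Fin n) ℕ) (h01 : ZeroOne X) :
    List.TFAE
      [AlphaPlusStable (matGraph X),
       ∃ σ : Equiv.Perm (Fin n), ∀ i, X i (σ i) ≠ 0,
       termRank X = n,
       0 < perm X] := by
  tfae_have 2 → 1
  | ⟨σ, hσ⟩ => alphaPlus_of_matching h01 σ hσ
  tfae_have 1 → 2
  | h => by
    by_contra hno
    exact not_alphaPlus h01 hno h
  tfae_have 2 → 3
  | ⟨σ, hσ⟩ => termRank_of_perm σ hσ
  tfae_have 3 → 2
  | h => perm_of_termRank h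
  tfae_have 2 → 4
  | ⟨σ, hσ⟩ => perm_pos_of σ hσ
  tfae_have 4 → 2
  | h => of_perm_pos h
  tfae_finish
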